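/- Let m ≥ 2, let A be an m×m positive definite symmetric real matrix, and let B be an m×m positive semidefinite symmetric real matrix. Then ∫_{O(m)} [ (tr(A H B Hᵀ))² − tr((A H B Hᵀ)²) ] dH = [ (tr A)² − tr(A²) ] · [ (tr B)² − tr(B²) ] / (m(m−1)), where the integral is with respect to the Haar probability measure on O(m). -/

import Mathlib

open MeasureTheory Matrix

/-- The Borel-type measurable structure on real matrices (entrywise, as a pi type). -/
noncomputable instance matrixMeasurableSpace (m n : Type*) :
    MeasurableSpace (Matrix m n ℝ) := MeasurableSpace.pi

namespace Stmt2Aux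

variable {m : ℕ}

/-- `L X = 2 Λ² X`, realized on the full index set `Fin m × Fin m`. -/
def L (X : Matrix (Fin m) (Fin m) ℝ) :
    Matrix (Fin m × Fin m) (Fin m × Fin m) ℝ :=
  Matrix.of fun p q => X p.1 q.1 * X p.2 q.2 - X p.1 q.2 * X p.2 q.1

lemma L_apply (X : Matrix (Fin m) (Fin m) ℝ) (p q : Fin m × Fin m) :
    L X p q = X p.1 q.1 * X p.2 q.2 - X p.1 q.2 * X p.2 q.1 := rfl

lemma sum_swap' (f : Fin m × Fin m → ℝ) :
    ∑ r : Fin m × Fin m, f (r.2, r.1) = ∑ r : Fin m × Fin m, f r :=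
  Fintype.sum_equiv (Equiv.prodComm _ _) _ _ (fun _ => rfl)

lemma hfac (f g : Fin m → ℝ) :
    (∑ a, f a) * (∑ b, g b) = ∑ r : Fin m × Fin m, f r.1 * g r.2 := by
  rw [Fintype.sum_prod_type, Fintype.sum_mul_sum]

lemma L_mul (X Y : Matrix (Fin m) (Fin m) ℝ) :
    L X * L Y = (2 : ℝ) • L (X * Y) := by
  ext p q
  simp only [mul_apply, L_apply, Matrix.smul_apply, smul_eq_mul]
  have e1 : ∑ r : Fin m × Fin m, (X p.1 r.1 * Y r.1 q.1) * (X p.2 r.2 * Y r.2 q.2)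
      = (X * Y) p.1 q.1 * (X * Y) p.2 q.2 := by
    rw [mul_apply, mul_apply, hfac]
  have e2 : ∑ r : Fin m × Fin m, (X p.1 r.1 * Y r.1 q.2) * (X p.2 r.2 * Y r.2 q.1)
      = (X * Y) p.1 q.2 * (X * Y) p.2 q.1 := by
    rw [mul_apply, mul_apply, hfac]
  have e3 : ∑ r : Fin m × Fin m, (X p.1 r.2 * Y r.2 q.2) * (X p.2 r.1 * Y r.1 q.1)
      = (X * Y) p.1 q.2 * (X * Y) p.2 q.1 := by
    rw [← e2]
    exact sum_swap' (fun r => (X p.1 r.1 * Y r.1 q.2) * (X p.2 r.2 * Y r.2 q.1))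
  have e4 : ∑ r : Fin m × Fin m, (X p.1 r.2 * Y r.2 q.1) * (X p.2 r.1 * Y r.1 q.2)
      = (X * Y) p.1 q.1 * (X * Y) p.2 q.2 := by
    rw [← e1]
    exact sum_swap' (fun r => (X p.1 r.1 * Y r.1 q.1) * (X p.2 r.2 * Y r.2 q.2))
  calc ∑ r : Fin m × Fin m,
        (X p.1 r.1 * X p.2 r.2 - X p.1 r.2 * X p.2 r.1) *
          (Y r.1 q.1 * Y r.2 q.2 - Y r.1 q.2 * Y r.2 q.1)
      = ∑ r : Fin m × Fin m,
          ((X p.1 r.1 * Y r.1 q.1) * (X p.2 r.2 * Y r.2 q.2)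
            - (X p.1 r.1 * Y r.1 q.2) * (X p.2 r.2 * Y r.2 q.1)
            - (X p.1 r.2 * Y r.2 q.2) * (X p.2 r.1 * Y r.1 q.1)
            + (X p.1 r.2 * Y r.2 q.1) * (X p.2 r.1 * Y r.1 q.2)) :=
        Finset.sum_congr rfl (fun r _ => by ring)
    _ = 2 * ((X * Y) p.1 q.1 * (X * Y) p.2 q.2 - (X * Y) p.1 q.2 * (X * Y) p.2 q.1) := by
        rw [Finset.sum_add_distrib, Finset.sum_sub_distrib, Finset.sum_sub_distrib,
          e1, e2, e3, e4]
        ring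

lemma L_transpose (X : Matrix (Fin m) (Fin m) ℝ) : (L X)ᵀ = L Xᵀ := by
  ext p q
  simp [L_apply, transpose_apply]
  ring

lemma trace_L (X : Matrix (Fin m) (Fin m) ℝ) :
    (L X).trace = X.trace ^ 2 - (X * X).trace := by
  simp only [trace, diag, L_apply, Fintype.sum_prod_type, mul_apply, sq]
  rw [Finset.sum_mul_sum]
  rw [← Finset.sum_sub_distrib]
  congr 1
  ext i
  rw [← Finset.sum_sub_distrib]

lemma oneL_mul (M : Matrix (Fin m × Fin m) (Fin m × Fin m) ℝ) (p q : Fin m × Fin m) :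
    (L (1 : Matrix (Fin m) (Fin m) ℝ) * M) p q = M p q - M (p.2, p.1) q := by
  simp only [mul_apply, L_apply, one_apply, Fintype.sum_prod_type]
  simp [ite_mul, mul_ite, sub_mul, Finset.sum_ite_eq, Finset.sum_ite_eq',
    Finset.sum_sub_distrib]

lemma mul_oneL (M : Matrix (Fin m × Fin m) (Fin m × Fin m) ℝ) (p q : Fin m × Fin m) :
    (M * L (1 : Matrix (Fin m) (Fin m) ℝ)) p q = M p q - M p (q.2, q.1) := by
  simp only [mul_apply, L_apply, one_apply, Fintype.sum_prod_type]
  simp [ite_mul, mul_ite, sub_mul, mul_sub, Finset.sum_ite_eq, Finset.sum_ite_eq',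
    Finset.sum_sub_distrib]

/-- sign-flip diagonal matrix -/
def Dm (x : Fin m) : Matrix (Fin m) (Fin m) ℝ :=
  Matrix.diagonal (fun i => if i = x then (-1 : ℝ) else 1)

lemma Dm_mem (x : Fin m) : Dm x ∈ Matrix.orthogonalGroup (Fin m) ℝ := by
  rw [Matrix.mem_orthogonalGroup_iff]
  have : (Dm x)ᵀ = Dm x := by
    simp [Dm, Matrix.diagonal_transpose]
  rw [this, Dm, Matrix.diagonal_mul_diagonal]
  convert Matrix.diagonal_one
  rename_i i
  split_ifs <;> norm_num

lemma L_Dm_eq (x : Fin m) :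
    L (Dm x) = Matrix.diagonal
        (fun p : Fin m × Fin m =>
          (if p.1 = x then (-1:ℝ) else 1) * (if p.2 = x then (-1:ℝ) else 1))
      * L (1 : Matrix (Fin m) (Fin m) ℝ) := by
  ext p q
  rw [Matrix.diagonal_mul]
  simp only [L_apply, Dm, Matrix.diagonal_apply, one_apply]
  split_ifs <;> ring

/-- permutation matrix -/
def Pm (σ : Equiv.Perm (Fin m)) : Matrix (Fin m) (Fin m) ℝ :=
  Matrix.of fun a b => if a = σ b then 1 else 0

lemma Pm_mem (σ : Equiv.Perm (Fin m)) : Pm σ ∈ Matrix.orthogonalGroup (Fin m) ℝ := by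
  rw [Matrix.mem_orthogonalGroup_iff]
  ext a b
  simp only [mul_apply, Matrix.star_eq_conjTranspose, conjTranspose_apply, transpose_apply, Pm, of_apply,
    star_trivial, one_apply]
  simp only [ite_mul, one_mul, zero_mul, ← Equiv.symm_apply_eq]
  rw [Finset.sum_ite_eq Finset.univ (σ.symm a) (fun c => if σ.symm b = c then (1:ℝ) else 0)]
  simp [eq_comm, EmbeddingLike.apply_eq_iff_eq]

lemma Pm_transpose (σ : Equiv.Perm (Fin m)) : (Pm σ)ᵀ = Pm σ.symm := by
  ext a b
  simp only [transpose_apply, Pm, of_apply]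
  congr 1
  simp [eq_comm, Equiv.eq_symm_apply]

lemma L_Pm_mul (σ : Equiv.Perm (Fin m)) (M : Matrix (Fin m × Fin m) (Fin m × Fin m) ℝ)
    (p q : Fin m × Fin m) :
    (L (Pm σ) * M) p q
      = M (σ.symm p.1, σ.symm p.2) q - M (σ.symm p.2, σ.symm p.1) q := by
  simp only [mul_apply, L_apply, Pm, of_apply, Fintype.sum_prod_type]
  simp only [← Equiv.symm_apply_eq]
  simp [ite_mul, mul_ite, sub_mul, Finset.sum_ite_eq, Finset.sum_ite_eq',
    Finset.sum_sub_distrib]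

lemma mul_L_Pm (σ : Equiv.Perm (Fin m)) (M : Matrix (Fin m × Fin m) (Fin m × Fin m) ℝ)
    (p q : Fin m × Fin m) :
    (M * L (Pm σ)) p q = M p (σ q.1, σ q.2) - M p (σ q.2, σ q.1) := by
  simp only [mul_apply, L_apply, Pm, of_apply, Fintype.sum_prod_type]
  simp [ite_mul, mul_ite, mul_sub, Finset.sum_ite_eq, Finset.sum_ite_eq',
    Finset.sum_sub_distrib, eq_comm]

lemma exists_perm (i0 i1 i k : Fin m) (h01 : i0 ≠ i1) (hik : i ≠ k) :
    ∃ σ : Equiv.Perm (Fin m), σ i0 = i ∧ σ i1 = k := by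
  set τ := Equiv.swap i0 i with hτ
  set k' := τ.symm k with hk'
  have hk'0 : k' ≠ i0 := by
    intro h
    apply hik
    have : τ k' = k := by rw [hk', Equiv.apply_symm_apply]
    rw [h] at this
    simp [hτ, Equiv.swap_apply_left] at this
    exact this
  refine ⟨τ * Equiv.swap i1 k', ?_, ?_⟩
  · simp only [Equiv.Perm.mul_apply]
    rw [Equiv.swap_apply_of_ne_of_ne h01 (Ne.symm hk'0)]
    simp [hτ, Equiv.swap_apply_left]
  · simp only [Equiv.Perm.mul_apply]
    rw [Equiv.swap_apply_left, hk', Equiv.apply_symm_apply]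


section MeasureStuff

variable {m : ℕ}

lemma measurable_entry (i j : Fin m) :
    Measurable fun H : Matrix.orthogonalGroup (Fin m) ℝ =>
      (H : Matrix (Fin m) (Fin m) ℝ) i j :=
  (measurable_pi_apply j).comp ((measurable_pi_apply i).comp measurable_subtype_coe)

/-- `Q B H = H B Hᵀ`. -/
def Q (B : Matrix (Fin m) (Fin m) ℝ) (H : Matrix.orthogonalGroup (Fin m) ℝ) :
    Matrix (Fin m) (Fin m) ℝ :=
  (H : Matrix (Fin m) (Fin m) ℝ) * B * (H : Matrix (Fin m) (Fin m) ℝ)ᵀ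

lemma Q_apply (B : Matrix (Fin m) (Fin m) ℝ) (H : Matrix.orthogonalGroup (Fin m) ℝ)
    (i j : Fin m) :
    Q B H i j = ∑ d, (∑ c, (H : Matrix (Fin m) (Fin m) ℝ) i c * B c d)
      * (H : Matrix (Fin m) (Fin m) ℝ) j d := by
  simp [Q, mul_apply, transpose_apply]

lemma measurable_Q_entry (B : Matrix (Fin m) (Fin m) ℝ) (i j : Fin m) :
    Measurable fun H : Matrix.orthogonalGroup (Fin m) ℝ => Q B H i j := by
  simp only [Q_apply]
  exact Finset.measurable_sum _ (fun d _ =>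
    (Finset.measurable_sum _ (fun c _ => (measurable_entry i c).mul_const (B c d))).mul
      (measurable_entry j d))

lemma measurable_LQ_entry (B : Matrix (Fin m) (Fin m) ℝ) (p q : Fin m × Fin m) :
    Measurable fun H : Matrix.orthogonalGroup (Fin m) ℝ => L (Q B H) p q := by
  simp only [L_apply]
  exact ((measurable_Q_entry B p.1 q.1).mul (measurable_Q_entry B p.2 q.2)).sub
    ((measurable_Q_entry B p.1 q.2).mul (measurable_Q_entry B p.2 q.1))

lemma measurable_mul_left (g : Matrix.orthogonalGroup (Fin m) ℝ) :
    Measurable fun H : Matrix.orthogonalGroup (Fin m) ℝ => g * H := by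
  have h1 : Measurable fun H : Matrix.orthogonalGroup (Fin m) ℝ =>
      ((g : Matrix (Fin m) (Fin m) ℝ) * (H : Matrix (Fin m) (Fin m) ℝ)) := by
    apply measurable_pi_lambda
    intro i
    apply measurable_pi_lambda
    intro j
    simp only [mul_apply]
    exact Finset.measurable_sum _ (fun c _ => (measurable_entry c j).const_mul _)
  exact Measurable.subtype_mk h1

lemma transpose_coe_mul (H : Matrix.orthogonalGroup (Fin m) ℝ) :
    (H : Matrix (Fin m) (Fin m) ℝ)ᵀ * (H : Matrix (Fin m) (Fin m) ℝ) = 1 := by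
  have h2 := H.2
  rw [Matrix.mem_orthogonalGroup_iff'] at h2
  simpa [Matrix.star_eq_conjTranspose,
    Matrix.conjTranspose_eq_transpose_of_trivial] using h2

lemma entry_abs_le (H : Matrix.orthogonalGroup (Fin m) ℝ) (i j : Fin m) :
    |(H : Matrix (Fin m) (Fin m) ℝ) i j| ≤ 1 := by
  have h := congrFun (congrFun (transpose_coe_mul H) j) j
  simp only [mul_apply, transpose_apply, one_apply_eq] at h
  rw [abs_le_one_iff_mul_self_le_one]
  calc (H : Matrix (Fin m) (Fin m) ℝ) i j * (H : Matrix (Fin m) (Fin m) ℝ) i j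
      ≤ ∑ k, (H : Matrix (Fin m) (Fin m) ℝ) k j * (H : Matrix (Fin m) (Fin m) ℝ) k j :=
        Finset.single_le_sum
          (f := fun k => (H : Matrix (Fin m) (Fin m) ℝ) k j * (H : Matrix (Fin m) (Fin m) ℝ) k j)
          (fun k _ => mul_self_nonneg _) (Finset.mem_univ i)
    _ = 1 := h

/-- total absolute bound for `B` -/
def CB (B : Matrix (Fin m) (Fin m) ℝ) : ℝ := ∑ c, ∑ d, |B c d|

lemma CB_nonneg (B : Matrix (Fin m) (Fin m) ℝ) : 0 ≤ CB B :=
  Finset.sum_nonneg fun _ _ => Finset.sum_nonneg fun _ _ => abs_nonneg _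

lemma Q_abs_le (B : Matrix (Fin m) (Fin m) ℝ) (H : Matrix.orthogonalGroup (Fin m) ℝ)
    (i j : Fin m) : |Q B H i j| ≤ CB B := by
  rw [Q_apply]
  calc |∑ d, (∑ c, (H : Matrix (Fin m) (Fin m) ℝ) i c * B c d)
        * (H : Matrix (Fin m) (Fin m) ℝ) j d|
      ≤ ∑ d, |(∑ c, (H : Matrix (Fin m) (Fin m) ℝ) i c * B c d)
        * (H : Matrix (Fin m) (Fin m) ℝ) j d| := Finset.abs_sum_le_sum_abs _ _
    _ ≤ ∑ d, ∑ c, |B c d| := by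
        refine Finset.sum_le_sum fun d _ => ?_
        rw [abs_mul]
        calc |∑ c, (H : Matrix (Fin m) (Fin m) ℝ) i c * B c d|
              * |(H : Matrix (Fin m) (Fin m) ℝ) j d|
            ≤ |∑ c, (H : Matrix (Fin m) (Fin m) ℝ) i c * B c d| * 1 := by
              refine mul_le_mul_of_nonneg_left (entry_abs_le H j d) (abs_nonneg _)
          _ = |∑ c, (H : Matrix (Fin m) (Fin m) ℝ) i c * B c d| := mul_one _
          _ ≤ ∑ c, |(H : Matrix (Fin m) (Fin m) ℝ) i c * B c d| :=
              Finset.abs_sum_le_sum_abs _ _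
          _ ≤ ∑ c, |B c d| := by
              refine Finset.sum_le_sum fun c _ => ?_
              rw [abs_mul]
              calc |(H : Matrix (Fin m) (Fin m) ℝ) i c| * |B c d|
                  ≤ 1 * |B c d| :=
                    mul_le_mul_of_nonneg_right (entry_abs_le H i c) (abs_nonneg _)
                _ = |B c d| := one_mul _
    _ = CB B := by unfold CB; rw [Finset.sum_comm]

lemma LQ_abs_le (B : Matrix (Fin m) (Fin m) ℝ) (H : Matrix.orthogonalGroup (Fin m) ℝ)
    (p q : Fin m × Fin m) : |L (Q B H) p q| ≤ 2 * CB B ^ 2 := by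
  rw [L_apply]
  have h1 := Q_abs_le B H p.1 q.1
  have h2 := Q_abs_le B H p.2 q.2
  have h3 := Q_abs_le B H p.1 q.2
  have h4 := Q_abs_le B H p.2 q.1
  have a1 := abs_nonneg (Q B H p.1 q.1)
  have a2 := abs_nonneg (Q B H p.2 q.2)
  have a3 := abs_nonneg (Q B H p.1 q.2)
  have a4 := abs_nonneg (Q B H p.2 q.1)
  calc |Q B H p.1 q.1 * Q B H p.2 q.2 - Q B H p.1 q.2 * Q B H p.2 q.1|
      ≤ |Q B H p.1 q.1 * Q B H p.2 q.2| + |Q B H p.1 q.2 * Q B H p.2 q.1| :=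
        abs_sub _ _
    _ ≤ 2 * CB B ^ 2 := by
        rw [abs_mul, abs_mul]
        nlinarith

lemma integrable_LQ (B : Matrix (Fin m) (Fin m) ℝ)
    (μ : Measure (Matrix.orthogonalGroup (Fin m) ℝ)) [IsProbabilityMeasure μ]
    (p q : Fin m × Fin m) :
    Integrable (fun H => L (Q B H) p q) μ := by
  refine Integrable.mono' (integrable_const (2 * CB B ^ 2))
    (measurable_LQ_entry B p q).aestronglyMeasurable (ae_of_all _ fun H => ?_)
  rw [Real.norm_eq_abs]
  exact LQ_abs_le B H p q

end MeasureStuff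


section IntegralMatrix

variable {m : ℕ} {μ : Measure (Matrix.orthogonalGroup (Fin m) ℝ)}

lemma mul_integral_matrix (C : Matrix (Fin m × Fin m) (Fin m × Fin m) ℝ)
    {f : Matrix.orthogonalGroup (Fin m) ℝ → Matrix (Fin m × Fin m) (Fin m × Fin m) ℝ}
    (hf : ∀ p q, Integrable (fun H => f H p q) μ) :
    C * (Matrix.of fun p q => ∫ H, f H p q ∂μ)
      = Matrix.of fun p q => ∫ H, (C * f H) p q ∂μ := by
  ext p q
  simp only [mul_apply, of_apply]
  calc ∑ r, C p r * ∫ H, f H r q ∂μ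
      = ∑ r, ∫ H, C p r * f H r q ∂μ :=
        Finset.sum_congr rfl fun r _ => (integral_const_mul _ _).symm
    _ = ∫ H, ∑ r, C p r * f H r q ∂μ :=
        (integral_finset_sum _ fun r _ => (hf r q).const_mul _).symm

lemma integrable_mul_left_matrix (C : Matrix (Fin m × Fin m) (Fin m × Fin m) ℝ)
    {f : Matrix.orthogonalGroup (Fin m) ℝ → Matrix (Fin m × Fin m) (Fin m × Fin m) ℝ}
    (hf : ∀ p q, Integrable (fun H => f H p q) μ) (p q : Fin m × Fin m) :
    Integrable (fun H => (C * f H) p q) μ := by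
  simp only [mul_apply]
  exact integrable_finset_sum _ fun r _ => (hf r q).const_mul _

lemma integral_matrix_mul (C : Matrix (Fin m × Fin m) (Fin m × Fin m) ℝ)
    {f : Matrix.orthogonalGroup (Fin m) ℝ → Matrix (Fin m × Fin m) (Fin m × Fin m) ℝ}
    (hf : ∀ p q, Integrable (fun H => f H p q) μ) :
    (Matrix.of fun p q => ∫ H, f H p q ∂μ) * C
      = Matrix.of fun p q => ∫ H, (f H * C) p q ∂μ := by
  ext p q
  simp only [mul_apply, of_apply]
  calc ∑ r, (∫ H, f H p r ∂μ) * C r q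
      = ∑ r, ∫ H, f H p r * C r q ∂μ :=
        Finset.sum_congr rfl fun r _ => (integral_mul_const _ _).symm
    _ = ∫ H, ∑ r, f H p r * C r q ∂μ :=
        (integral_finset_sum _ fun r _ => (hf p r).mul_const _).symm

end IntegralMatrix

end Stmt2Aux

open Stmt2Aux in
/-- For `A` positive definite symmetric, `B` positive semidefinite symmetric
(`m × m` real matrices, `m ≥ 2`), and `μ` the Haar probability measure on `O(m)`,
`∫ [(tr(A H B Hᵀ))² − tr((A H B Hᵀ)²)] dH
  = [(tr A)² − tr(A²)]·[(tr B)² − tr(B²)]/(m(m−1))`. -/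
theorem stmt2 (m : ℕ) (hm : 2 ≤ m)
    (A B : Matrix (Fin m) (Fin m) ℝ)
    (hA : A.PosDef) (hAs : A.IsSymm) (hB : B.PosSemidef) (hBs : B.IsSymm)
    (μ : Measure (Matrix.orthogonalGroup (Fin m) ℝ)) [IsProbabilityMeasure μ]
    (hμ : ∀ g : Matrix.orthogonalGroup (Fin m) ℝ,
      μ.map (fun h => g * h) = μ) :
    (∫ H : Matrix.orthogonalGroup (Fin m) ℝ,
        (fun M : Matrix (Fin m) (Fin m) ℝ => M.trace ^ 2 - (M * M).trace)
          (A * (H : Matrix (Fin m) (Fin m) ℝ) * B * (H : Matrix (Fin m) (Fin m) ℝ)ᵀ) ∂μ)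
      = (A.trace ^ 2 - (A * A).trace) * (B.trace ^ 2 - (B * B).trace)
          / ((m : ℝ) * ((m : ℝ) - 1)) := by
  classical
  have hInt : ∀ p q : Fin m × Fin m, Integrable (fun H => L (Q B H) p q) μ :=
    fun p q => integrable_LQ B μ p q
  set E : Matrix (Fin m × Fin m) (Fin m × Fin m) ℝ :=
    Matrix.of (fun p q => ∫ H, L (Q B H) p q ∂μ) with hEdef
  -- conjugation identity
  have hconj : ∀ g H : Matrix.orthogonalGroup (Fin m) ℝ,
      L (g : Matrix (Fin m) (Fin m) ℝ) * L (Q B H)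
          * (L (g : Matrix (Fin m) (Fin m) ℝ))ᵀ
        = (4 : ℝ) • L (Q B (g * H)) := by
    intro g H
    have hQ : (g : Matrix (Fin m) (Fin m) ℝ) * Q B H * (g : Matrix (Fin m) (Fin m) ℝ)ᵀ
        = Q B (g * H) := by
      simp only [Q, MulMemClass.coe_mul, transpose_mul, Matrix.mul_assoc]
    rw [L_transpose, L_mul, smul_mul_assoc, L_mul, smul_smul, ← hQ]
    norm_num
  -- invariance of the mean under left translation
  have hmap : ∀ (g : Matrix.orthogonalGroup (Fin m) ℝ) (p q : Fin m × Fin m),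
      ∫ H, L (Q B (g * H)) p q ∂μ = ∫ H, L (Q B H) p q ∂μ := by
    intro g p q
    have h1 : AEMeasurable (fun h : Matrix.orthogonalGroup (Fin m) ℝ => g * h) μ :=
      (measurable_mul_left g).aemeasurable
    have h2 : AEStronglyMeasurable (fun H => L (Q B H) p q)
        (μ.map (fun h => g * h)) := by
      rw [hμ g]
      exact (measurable_LQ_entry B p q).aestronglyMeasurable
    calc ∫ H, L (Q B (g * H)) p q ∂μ
        = ∫ H, L (Q B H) p q ∂(μ.map (fun h => g * h)) := (integral_map h1 h2).symm
      _ = ∫ H, L (Q B H) p q ∂μ := by rw [hμ g]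
  -- the commutation property
  have hinv : ∀ g : Matrix.orthogonalGroup (Fin m) ℝ,
      L (g : Matrix (Fin m) (Fin m) ℝ) * E * (L (g : Matrix (Fin m) (Fin m) ℝ))ᵀ
        = (4 : ℝ) • E := by
    intro g
    rw [hEdef, mul_integral_matrix _ hInt,
      integral_matrix_mul _ (integrable_mul_left_matrix _ hInt)]
    ext p q
    simp only [of_apply, Matrix.smul_apply, smul_eq_mul]
    calc ∫ H, (L (g : Matrix (Fin m) (Fin m) ℝ) * L (Q B H)
            * (L (g : Matrix (Fin m) (Fin m) ℝ))ᵀ) p q ∂μ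
        = ∫ H, 4 * L (Q B (g * H)) p q ∂μ := by
          congr 1
          funext H
          rw [hconj g H]
          simp
      _ = 4 * ∫ H, L (Q B (g * H)) p q ∂μ := integral_const_mul _ _
      _ = 4 * ∫ H, L (Q B H) p q ∂μ := by rw [hmap g p q]
  have hL1T : (L (1 : Matrix (Fin m) (Fin m) ℝ))ᵀ = L 1 := by
    rw [L_transpose, transpose_one]
  have hPEP : L (1 : Matrix (Fin m) (Fin m) ℝ) * E * L 1 = (4 : ℝ) • E := by
    have h := hinv 1
    rwa [OneMemClass.coe_one, hL1T] at h
  -- basic entrywise relation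
  have hs : ∀ i k j l : Fin m,
      4 * E (i,k) (j,l)
        = E (i,k) (j,l) - E (k,i) (j,l) - E (i,k) (l,j) + E (k,i) (l,j) := by
    intro i k j l
    have h2 := Matrix.ext_iff.mpr hPEP (i,k) (j,l)
    rw [mul_oneL, oneL_mul, oneL_mul] at h2
    simp only [Matrix.smul_apply, smul_eq_mul] at h2
    linarith [h2]
  have hdiagL : ∀ i j l : Fin m, E (i,i) (j,l) = 0 := by
    intro i j l
    have := hs i i j l
    linarith
  have hdiagR : ∀ i k j : Fin m, E (i,k) (j,j) = 0 := by
    intro i k j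
    have := hs i k j j
    linarith
  have hswapL : ∀ i k j l : Fin m, E (k,i) (j,l) = - E (i,k) (j,l) := by
    intro i k j l
    have h1 := hs i k j l
    have h2 := hs k i j l
    linarith
  have hswapR : ∀ i k j l : Fin m, E (i,k) (l,j) = - E (i,k) (j,l) := by
    intro i k j l
    have h1 := hs i k j l
    have h2 := hs i k l j
    linarith
  -- sign-flip invariance
  have hsign : ∀ x i k j l : Fin m,
      ((if i = x then (-1:ℝ) else 1) * (if k = x then (-1:ℝ) else 1)
        * (if j = x then (-1:ℝ) else 1) * (if l = x then (-1:ℝ) else 1))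
          * E (i,k) (j,l) = E (i,k) (j,l) := by
    intro x i k j l
    have h := hinv ⟨Dm x, Dm_mem x⟩
    rw [show ((⟨Dm x, Dm_mem x⟩ : Matrix.orthogonalGroup (Fin m) ℝ) :
        Matrix (Fin m) (Fin m) ℝ) = Dm x from rfl] at h
    rw [L_Dm_eq, transpose_mul, hL1T, Matrix.diagonal_transpose] at h
    have hrw : Matrix.diagonal (fun p : Fin m × Fin m =>
          (if p.1 = x then (-1:ℝ) else 1) * (if p.2 = x then (-1:ℝ) else 1))
          * L (1 : Matrix (Fin m) (Fin m) ℝ) * E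
          * (L (1 : Matrix (Fin m) (Fin m) ℝ)
            * Matrix.diagonal (fun p : Fin m × Fin m =>
              (if p.1 = x then (-1:ℝ) else 1) * (if p.2 = x then (-1:ℝ) else 1)))
        = Matrix.diagonal (fun p : Fin m × Fin m =>
            (if p.1 = x then (-1:ℝ) else 1) * (if p.2 = x then (-1:ℝ) else 1))
          * (L (1 : Matrix (Fin m) (Fin m) ℝ) * E * L 1)
          * Matrix.diagonal (fun p : Fin m × Fin m =>
            (if p.1 = x then (-1:ℝ) else 1) * (if p.2 = x then (-1:ℝ) else 1)) := by
      simp only [Matrix.mul_assoc]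
    rw [hrw, hPEP] at h
    have h2 := Matrix.ext_iff.mpr h (i,k) (j,l)
    rw [Matrix.mul_diagonal, Matrix.diagonal_mul] at h2
    simp only [Matrix.smul_apply, smul_eq_mul] at h2
    linear_combination h2 / 4
  -- permutation invariance
  have hperm : ∀ (σ : Equiv.Perm (Fin m)) (i k j l : Fin m),
      E (σ i, σ k) (σ j, σ l) = E (i,k) (j,l) := by
    intro σ i k j l
    have h := hinv ⟨Pm σ, Pm_mem σ⟩
    rw [show ((⟨Pm σ, Pm_mem σ⟩ : Matrix.orthogonalGroup (Fin m) ℝ) :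
        Matrix (Fin m) (Fin m) ℝ) = Pm σ from rfl, L_transpose, Pm_transpose] at h
    have h2 := Matrix.ext_iff.mpr h (σ i, σ k) (σ j, σ l)
    rw [mul_L_Pm, L_Pm_mul, L_Pm_mul] at h2
    simp only [Equiv.symm_apply_apply, Matrix.smul_apply, smul_eq_mul] at h2
    have h3 := hs i k j l
    linarith
  -- vanishing off the swap-orbit
  have hzero : ∀ i k j l : Fin m, i ≠ k → j ≠ l → ¬(j = i ∧ l = k) → ¬(j = k ∧ l = i) →
      E (i,k) (j,l) = 0 := by
    intro i k j l hik hjl h1 h2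
    by_cases hij : i = j
    · have hli : ¬ (i = l) := fun h => hjl (hij.symm.trans h)
      have hkl : ¬ (k = l) := fun h => h1 ⟨hij.symm, h.symm⟩
      have hjl' : ¬ (j = l) := hjl
      have hx := hsign l i k j l
      rw [if_neg hli, if_neg hkl, if_neg hjl', if_pos rfl] at hx
      norm_num at hx
      linarith
    · by_cases hil : i = l
      · have hij' : ¬ (i = j) := hij
        have hkj : ¬ (k = j) := fun h => h2 ⟨h.symm, hil.symm⟩
        have hlj : ¬ (l = j) := fun h => hij (hil.trans h)
        have hx := hsign j i k j l
        rw [if_neg hij', if_neg hkj, if_pos rfl, if_neg hlj] at hx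
        norm_num at hx
        linarith
      · have hki : ¬ (k = i) := fun h => hik h.symm
        have hji : ¬ (j = i) := fun h => hij h.symm
        have hli : ¬ (l = i) := fun h => hil h.symm
        have hx := hsign i i k j l
        rw [if_pos rfl, if_neg hki, if_neg hji, if_neg hli] at hx
        norm_num at hx
        linarith
  -- the two distinguished indices
  have h01 : (⟨0, by omega⟩ : Fin m) ≠ ⟨1, by omega⟩ := by
    intro h
    simpa using congrArg Fin.val h
  set i0 : Fin m := ⟨0, by omega⟩
  set i1 : Fin m := ⟨1, by omega⟩
  set a : ℝ := E (i0, i1) (i0, i1) with hadef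
  have hdiagval : ∀ i k : Fin m, i ≠ k → E (i,k) (i,k) = a := by
    intro i k hik
    obtain ⟨σ, hσ0, hσ1⟩ := exists_perm i0 i1 i k h01 hik
    have := hperm σ i0 i1 i0 i1
    rw [hσ0, hσ1] at this
    exact this.symm ▸ rfl
  -- full structure of E
  have hstruct : ∀ p q : Fin m × Fin m,
      E p q = a * L (1 : Matrix (Fin m) (Fin m) ℝ) p q := by
    rintro ⟨i, k⟩ ⟨j, l⟩
    by_cases hik : i = k
    · subst hik
      rw [hdiagL]
      rw [Stmt2Aux.L_apply]
      simp only [one_apply]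
      ring
    · by_cases hjl : j = l
      · subst hjl
        rw [hdiagR]
        rw [Stmt2Aux.L_apply]
        simp only [one_apply]
        ring
      · by_cases hq1 : j = i ∧ l = k
        · obtain ⟨rfl, rfl⟩ := hq1
          rw [hdiagval j l hik, Stmt2Aux.L_apply]
          simp only [one_apply, if_pos rfl, if_neg hik,
            if_neg (fun h => hik h.symm : ¬ l = j)]
          norm_num
        · by_cases hq2 : j = k ∧ l = i
          · obtain ⟨rfl, rfl⟩ := hq2
            have h1 : E (l, j) (j, l) = - E (l, j) (l, j) := hswapR l j l j
            rw [h1, hdiagval l j hik, Stmt2Aux.L_apply]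
            simp only [one_apply, if_pos rfl, if_neg hik,
              if_neg (fun h => hik h.symm : ¬ j = l)]
            norm_num
          · rw [hzero i k j l hik hjl hq1 hq2, Stmt2Aux.L_apply]
            simp only [one_apply]
            have t1 : (if i = j then (1:ℝ) else 0) * (if k = l then (1:ℝ) else 0) = 0 := by
              rcases not_and_or.mp hq1 with h | h
              · rw [if_neg (fun hh => h hh.symm : ¬ i = j)]; ring
              · rw [if_neg (fun hh => h hh.symm : ¬ k = l), mul_zero]
            have t2 : (if i = l then (1:ℝ) else 0) * (if k = j then (1:ℝ) else 0) = 0 := by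
              rcases not_and_or.mp hq2 with h | h
              · rw [if_neg (fun hh => h hh.symm : ¬ k = j), mul_zero]
              · rw [if_neg (fun hh => h hh.symm : ¬ i = l)]; ring
            rw [t1, t2]
            ring
  -- trace identities for Q
  have hQtr : ∀ H : Matrix.orthogonalGroup (Fin m) ℝ, (Q B H).trace = B.trace := by
    intro H
    rw [Q, trace_mul_cycle, transpose_coe_mul H, Matrix.one_mul]
  have hQ2 : ∀ H : Matrix.orthogonalGroup (Fin m) ℝ,
      Q B H * Q B H = (H : Matrix (Fin m) (Fin m) ℝ) * (B * B)
        * (H : Matrix (Fin m) (Fin m) ℝ)ᵀ := by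
    intro H
    simp only [Q, Matrix.mul_assoc]
    rw [← Matrix.mul_assoc ((H : Matrix (Fin m) (Fin m) ℝ))ᵀ, transpose_coe_mul H,
      Matrix.one_mul]
  have hQQtr : ∀ H : Matrix.orthogonalGroup (Fin m) ℝ,
      (Q B H * Q B H).trace = (B * B).trace := by
    intro H
    rw [hQ2 H, trace_mul_cycle, transpose_coe_mul H, Matrix.one_mul]
  -- the trace of E
  have htrE : ∑ p : Fin m × Fin m, E p p = B.trace ^ 2 - (B * B).trace := by
    have h1 : ∑ p : Fin m × Fin m, E p p
        = ∫ H, ∑ p : Fin m × Fin m, L (Q B H) p p ∂μ := by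
      rw [integral_finset_sum _ (fun p _ => hInt p p)]
      rfl
    rw [h1]
    calc ∫ H, ∑ p : Fin m × Fin m, L (Q B H) p p ∂μ
        = ∫ (_H : Matrix.orthogonalGroup (Fin m) ℝ),
            (B.trace ^ 2 - (B * B).trace) ∂μ := by
          congr 1
          funext H
          have h2 : ∑ p : Fin m × Fin m, L (Q B H) p p = (L (Q B H)).trace := rfl
          rw [h2, trace_L, hQtr H, hQQtr H]
      _ = B.trace ^ 2 - (B * B).trace := by simp [measure_univ]
  have htrL1 : ∑ p : Fin m × Fin m, L (1 : Matrix (Fin m) (Fin m) ℝ) p p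
      = (m : ℝ) ^ 2 - (m : ℝ) := by
    have h2 : ∑ p : Fin m × Fin m, L (1 : Matrix (Fin m) (Fin m) ℝ) p p
        = (L (1 : Matrix (Fin m) (Fin m) ℝ)).trace := rfl
    rw [h2, trace_L, Matrix.mul_one, trace_one]
    simp
  have haval : a * ((m : ℝ) ^ 2 - (m : ℝ)) = B.trace ^ 2 - (B * B).trace := by
    have h3 : ∑ p : Fin m × Fin m, E p p = a * ((m : ℝ) ^ 2 - (m : ℝ)) := by
      rw [← htrL1, Finset.mul_sum]
      exact Finset.sum_congr rfl fun p _ => hstruct p p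
    linarith [htrE, h3]
  -- pointwise identity for the integrand
  have hptwise : ∀ H : Matrix.orthogonalGroup (Fin m) ℝ,
      (A * (H : Matrix (Fin m) (Fin m) ℝ) * B * (H : Matrix (Fin m) (Fin m) ℝ)ᵀ).trace ^ 2
          - ((A * (H : Matrix (Fin m) (Fin m) ℝ) * B * (H : Matrix (Fin m) (Fin m) ℝ)ᵀ)
            * (A * (H : Matrix (Fin m) (Fin m) ℝ) * B
              * (H : Matrix (Fin m) (Fin m) ℝ)ᵀ)).trace
        = (1/2) * ∑ p : Fin m × Fin m, ∑ r : Fin m × Fin m,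
            L A p r * L (Q B H) r p := by
    intro H
    have h0 : A * (H : Matrix (Fin m) (Fin m) ℝ) * B * (H : Matrix (Fin m) (Fin m) ℝ)ᵀ
        = A * Q B H := by
      simp only [Q, Matrix.mul_assoc]
    rw [h0, ← trace_L]
    have h2 : (L A * L (Q B H)).trace = 2 * (L (A * Q B H)).trace := by
      rw [Stmt2Aux.L_mul, trace_smul]
      simp
    have h3 : (L A * L (Q B H)).trace
        = ∑ p : Fin m × Fin m, ∑ r : Fin m × Fin m, L A p r * L (Q B H) r p := by
      simp only [trace, diag, mul_apply]
    linarith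
  have hIntA : ∀ p r : Fin m × Fin m,
      Integrable (fun H => L A p r * L (Q B H) r p) μ :=
    fun p r => (hInt r p).const_mul _
  have hmne : (m : ℝ) * ((m : ℝ) - 1) ≠ 0 := by
    have h2 : (2 : ℝ) ≤ (m : ℝ) := by exact_mod_cast hm
    have : (0 : ℝ) < (m : ℝ) * ((m : ℝ) - 1) := by nlinarith
    exact ne_of_gt this
  calc (∫ H : Matrix.orthogonalGroup (Fin m) ℝ,
        (fun M : Matrix (Fin m) (Fin m) ℝ => M.trace ^ 2 - (M * M).trace)
          (A * (H : Matrix (Fin m) (Fin m) ℝ) * B * (H : Matrix (Fin m) (Fin m) ℝ)ᵀ) ∂μ)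
      = ∫ H, (1/2) * ∑ p : Fin m × Fin m, ∑ r : Fin m × Fin m,
          L A p r * L (Q B H) r p ∂μ := by
        congr 1
        funext H
        exact hptwise H
    _ = (1/2) * ∑ p : Fin m × Fin m, ∑ r : Fin m × Fin m,
          L A p r * (∫ H, L (Q B H) r p ∂μ) := by
        rw [integral_const_mul]
        congr 1
        rw [integral_finset_sum _
          (fun p _ => integrable_finset_sum _ (fun r _ => hIntA p r))]
        refine Finset.sum_congr rfl fun p _ => ?_
        rw [integral_finset_sum _ (fun r _ => hIntA p r)]
        exact Finset.sum_congr rfl fun r _ => integral_const_mul _ _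
    _ = (1/2) * (a * (2 * (A.trace ^ 2 - (A * A).trace))) := by
        have h4 : ∑ p : Fin m × Fin m, ∑ r : Fin m × Fin m,
            L A p r * L (1 : Matrix (Fin m) (Fin m) ℝ) r p
            = (L A * L (1 : Matrix (Fin m) (Fin m) ℝ)).trace := by
          simp only [trace, diag, mul_apply]
        have h5 : ∑ p : Fin m × Fin m, ∑ r : Fin m × Fin m,
            L A p r * (∫ H, L (Q B H) r p ∂μ)
            = a * ∑ p : Fin m × Fin m, ∑ r : Fin m × Fin m,
                L A p r * L (1 : Matrix (Fin m) (Fin m) ℝ) r p := by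
          rw [Finset.mul_sum]
          refine Finset.sum_congr rfl fun p _ => ?_
          rw [Finset.mul_sum]
          refine Finset.sum_congr rfl fun r _ => ?_
          rw [show (∫ H, L (Q B H) r p ∂μ) = E r p from rfl, hstruct r p]
          ring
        rw [h5, h4, Stmt2Aux.L_mul, Matrix.mul_one, trace_smul, trace_L]
        simp only [smul_eq_mul]
    _ = (A.trace ^ 2 - (A * A).trace) * (B.trace ^ 2 - (B * B).trace)
          / ((m : ℝ) * ((m : ℝ) - 1)) := by
        rw [eq_div_iff hmne]
        linear_combination (A.trace ^ 2 - (A * A).trace) * haval
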